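/- Let f, g : ℝⁿ → ℝ be differentiable with gradients Lipschitz with constants L_f and L_g respectively. Then ∇(f + C·g) is Lipschitz with constant L_f + C·L_g for any C ≥ 0. In particular, the smoothed C-SVM objective F_μ(w) = (1/2)‖w‖² + C·Σᵢ ℏ_μ(1 - yᵢXᵢw), whose gradient is w - C(YX)ᵀu, has a Lipschitz-continuous gradient with constant 1 + (Cn/μ)·maxᵢ(‖XᵢᵀXᵢ‖₂/‖Xᵢ‖_∞). -/

import Mathlib

noncomputable def smoothedHinge (a t : ℝ) : ℝ :=
  sSup ((fun u : ℝ => u * t - a / 2 * u ^ 2) '' Set.Icc (0 : ℝ) 1)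

noncomputable def clampf (a t : ℝ) : ℝ := min (max (t / a) 0) 1

lemma clampf_mem (a t : ℝ) : clampf a t ∈ Set.Icc (0:ℝ) 1 :=
  ⟨le_min (le_max_right _ _) zero_le_one, min_le_right _ _⟩

lemma clampf_lipschitz (a : ℝ) (ha : 0 < a) (s t : ℝ) :
    |clampf a s - clampf a t| ≤ |s - t| / a := by
  have h1 : |max (s / a) 0 - max (t / a) 0| ≤ |s / a - t / a| :=
    abs_max_sub_max_le_abs _ _ _
  have h2 : |clampf a s - clampf a t| ≤ |max (s / a) 0 - max (t / a) 0| := by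
    have := abs_min_sub_min_le_max (max (s / a) 0) 1 (max (t / a) 0) 1
    simpa [clampf] using this.trans (by simp)
  have : |s / a - t / a| = |s - t| / a := by
    rw [div_sub_div_same, abs_div, abs_of_pos ha]
  linarith [h2.trans h1]

lemma argmax_le (a : ℝ) (ha : 0 < a) (t v : ℝ) (hv : v ∈ Set.Icc (0:ℝ) 1) :
    v * t - a / 2 * v ^ 2 ≤ clampf a t * t - a / 2 * (clampf a t) ^ 2 := by
  obtain ⟨hv0, hv1⟩ := hv
  rcases le_or_gt t 0 with h0 | h0
  · have : clampf a t = 0 := by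
      have hd : t / a ≤ 0 := div_nonpos_of_nonpos_of_nonneg h0 ha.le
      simp [clampf, max_eq_right hd]
    rw [this]; nlinarith
  rcases le_or_gt a t with h1 | h1
  · have : clampf a t = 1 := by
      have : (1:ℝ) ≤ t / a := (one_le_div ha).2 h1
      simp [clampf, max_eq_left (le_trans zero_le_one this), min_eq_right this]
    rw [this]
    nlinarith [mul_nonneg (sub_nonneg.2 hv1) (sub_nonneg.2 h1),
      mul_nonneg ha.le (sq_nonneg (1 - v))]
  · have hca : clampf a t = t / a := by
      have h2 : 0 ≤ t / a := by positivity
      have h3 : t / a ≤ 1 := (div_le_one ha).2 h1.le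
      simp [clampf, max_eq_left h2, min_eq_left h3]
    obtain ⟨c, hc⟩ : ∃ c, c = t / a := ⟨_, rfl⟩
    rw [hca, ← hc]
    have hta : a * c = t := by rw [hc]; exact mul_div_cancel₀ _ ha.ne'
    rw [← hta]
    nlinarith [mul_nonneg ha.le (sq_nonneg (c - v))]

lemma smoothedHinge_eq (a : ℝ) (ha : 0 < a) (t : ℝ) :
    smoothedHinge a t = clampf a t * t - a / 2 * (clampf a t) ^ 2 := by
  apply IsGreatest.csSup_eq
  constructor
  · exact ⟨clampf a t, clampf_mem a t, rfl⟩
  · rintro x ⟨v, hv, rfl⟩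
    exact argmax_le a ha t v hv

lemma smoothedHinge_hasDerivAt (a : ℝ) (ha : 0 < a) (t : ℝ) :
    HasDerivAt (smoothedHinge a) (clampf a t) t := by
  rw [hasDerivAt_iff_isLittleO]
  have key : ∀ s : ℝ, |smoothedHinge a s - smoothedHinge a t - (s - t) * clampf a t|
      ≤ (s - t) ^ 2 / a := by
    intro s
    have hcs := clampf_mem a s
    have hct := clampf_mem a t
    have hs := smoothedHinge_eq a ha s
    have ht := smoothedHinge_eq a ha t
    have lower : clampf a t * s - a / 2 * (clampf a t) ^ 2 ≤ smoothedHinge a s := by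
      rw [hs]; exact argmax_le a ha s _ hct
    have upper : clampf a s * t - a / 2 * (clampf a s) ^ 2 ≤ smoothedHinge a t := by
      rw [ht]; exact argmax_le a ha t _ hcs
    have hlip : |clampf a s - clampf a t| ≤ |s - t| / a := clampf_lipschitz a ha s t
    rw [abs_le]
    constructor
    · linarith [lower, ht.ge, ht.le, div_nonneg (sq_nonneg (s - t)) ha.le]
    · have h1 : smoothedHinge a s - smoothedHinge a t ≤ clampf a s * (s - t) := by
        nlinarith [hs, ht]
      have h2 : (clampf a s - clampf a t) * (s - t) ≤ (s - t) ^ 2 / a := by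
        have := abs_mul (clampf a s - clampf a t) (s - t)
        have h3 : (clampf a s - clampf a t) * (s - t) ≤ |clampf a s - clampf a t| * |s - t| := by
          rw [← abs_mul]; exact le_abs_self _
        have h4 : |clampf a s - clampf a t| * |s - t| ≤ |s - t| / a * |s - t| :=
          mul_le_mul_of_nonneg_right hlip (abs_nonneg _)
        have h6 : |s - t| * |s - t| = (s - t) ^ 2 := by rw [← abs_mul, ← sq, abs_of_nonneg (sq_nonneg _)]
        have h5 : |s - t| / a * |s - t| = (s - t) ^ 2 / a := by
          rw [div_mul_eq_mul_div, h6]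
        linarith
      nlinarith
  have hbig : (fun s => smoothedHinge a s - smoothedHinge a t - (s - t) • clampf a t)
      =O[nhds t] fun s => (s - t) ^ 2 := by
    apply Asymptotics.IsBigO.of_bound (1 / a)
    filter_upwards with s
    rw [Real.norm_eq_abs, Real.norm_eq_abs, smul_eq_mul]
    calc |smoothedHinge a s - smoothedHinge a t - (s - t) * clampf a t|
        ≤ (s - t) ^ 2 / a := key s
      _ = 1 / a * |(s - t) ^ 2| := by rw [abs_of_nonneg (sq_nonneg _)]; ring
  have hsmall : (fun s : ℝ => (s - t) ^ 2) =o[nhds t] fun s => s - t := by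
    rw [Asymptotics.isLittleO_iff]
    intro c hc
    filter_upwards [Metric.ball_mem_nhds t hc] with s hs
    rw [Metric.mem_ball, Real.dist_eq] at hs
    rw [Real.norm_eq_abs, Real.norm_eq_abs]
    calc |(s - t) ^ 2| = |s - t| * |s - t| := by rw [sq, abs_mul]
      _ ≤ c * |s - t| := mul_le_mul_of_nonneg_right hs.le (abs_nonneg _)
  exact hbig.trans_isLittleO hsmall

/-- Part 1: the gradient of `f + C·g` is Lipschitz with constant `L_f + C·L_g`.
Part 2: the smoothed C-SVM objective `F_μ(w) = ‖w‖²/2 + C Σᵢ ℏ_μ(1 - yᵢ⟨Xᵢ,w⟩)`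
has gradient `w - C (YX)ᵀ u` (with `uᵢ = clamp((1 - yᵢ⟨Xᵢ,w⟩)/(μ‖Xᵢ‖_∞), 0, 1)`),
which is Lipschitz with constant `1 + (C n/μ) maxᵢ ‖XᵢᵀXᵢ‖₂/‖Xᵢ‖_∞`, where
`‖XᵢᵀXᵢ‖₂ = ‖Xᵢ‖₂²`. -/
theorem sum_lipschitz_gradient_and_csvm {m : ℕ}
    (f g : EuclideanSpace ℝ (Fin m) → ℝ)
    (gf gg : EuclideanSpace ℝ (Fin m) → EuclideanSpace ℝ (Fin m))
    (hf : ∀ x, HasGradientAt f (gf x) x) (hg : ∀ x, HasGradientAt g (gg x) x)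
    (Lf Lg : ℝ) (hLf : ∀ x y, ‖gf x - gf y‖ ≤ Lf * ‖x - y‖)
    (hLg : ∀ x y, ‖gg x - gg y‖ ≤ Lg * ‖x - y‖)
    (C : ℝ) (hC : 0 ≤ C)
    (n p : ℕ) (hn : 0 < n)
    (X : Fin n → EuclideanSpace ℝ (Fin p)) (hX : ∀ i, X i ≠ 0)
    (y : Fin n → ℝ) (hy : ∀ i, y i = 1 ∨ y i = -1)
    (μ : ℝ) (hμ : 0 < μ)
    (u : Fin n → EuclideanSpace ℝ (Fin p) → ℝ)
    (hu : ∀ i w,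
      u i w = min (max ((1 - y i * (inner ℝ (X i) w : ℝ)) / (μ * (⨆ j, |X i j|))) 0) 1)
    (gradF : EuclideanSpace ℝ (Fin p) → EuclideanSpace ℝ (Fin p))
    (hgradF : ∀ w, gradF w = w - C • ∑ i, (y i * u i w) • X i) :
    ((∀ x, HasGradientAt (fun w => f w + C * g w) (gf x + C • gg x) x) ∧
      ∀ x y, ‖(gf x + C • gg x) - (gf y + C • gg y)‖ ≤ (Lf + C * Lg) * ‖x - y‖) ∧
    ((∀ w, HasGradientAt
        (fun w : EuclideanSpace ℝ (Fin p) =>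
          (1 / 2) * ‖w‖ ^ 2 +
            C * ∑ i, smoothedHinge (μ * (⨆ j, |X i j|)) (1 - y i * (inner ℝ (X i) w : ℝ)))
        (gradF w) w) ∧
      ∀ w v, ‖gradF w - gradF v‖ ≤
        (1 + C * n / μ * (⨆ i, ‖X i‖ ^ 2 / (⨆ j, |X i j|))) * ‖w - v‖) := by
  constructor
  · constructor
    · intro x
      rw [hasGradientAt_iff_hasFDerivAt]
      have heq : (InnerProductSpace.toDual ℝ (EuclideanSpace ℝ (Fin m))) (gf x + C • gg x)
          = (InnerProductSpace.toDual ℝ _) (gf x)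
            + C • (InnerProductSpace.toDual ℝ _) (gg x) := by
        simp
      rw [heq]
      exact (hf x).hasFDerivAt.add ((hg x).hasFDerivAt.const_mul C)
    · intro x z
      have h1 : gf x + C • gg x - (gf z + C • gg z) = gf x - gf z + C • (gg x - gg z) := by
        rw [smul_sub]; abel
      rw [h1]
      calc ‖gf x - gf z + C • (gg x - gg z)‖
          ≤ ‖gf x - gf z‖ + ‖C • (gg x - gg z)‖ := norm_add_le _ _
        _ = ‖gf x - gf z‖ + C * ‖gg x - gg z‖ := by
            rw [norm_smul, Real.norm_eq_abs, abs_of_nonneg hC]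
        _ ≤ Lf * ‖x - z‖ + C * (Lg * ‖x - z‖) :=
            add_le_add (hLf x z) (mul_le_mul_of_nonneg_left (hLg x z) hC)
        _ = (Lf + C * Lg) * ‖x - z‖ := by ring
  · have hS : ∀ i, 0 < ⨆ j, |X i j| := by
      intro i
      obtain ⟨j, hj⟩ : ∃ j, X i j ≠ 0 := by
        by_contra h
        push_neg at h
        exact hX i (by ext j; simpa using h j)
      have hb : BddAbove (Set.range fun j => |X i j|) := (Set.finite_range _).bddAbove
      exact lt_of_lt_of_le (abs_pos.2 hj) (le_ciSup hb j)
    have ha : ∀ i, 0 < μ * (⨆ j, |X i j|) := fun i => mul_pos hμ (hS i)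
    have huc : ∀ i w, u i w
        = clampf (μ * (⨆ j, |X i j|)) (1 - y i * (inner ℝ (X i) w : ℝ)) := by
      intro i w; rw [hu]; rfl
    have habs : ∀ i, |y i| = 1 := fun i => by rcases hy i with h | h <;> simp [h]
    constructor
    · intro w
      rw [hasGradientAt_iff_hasFDerivAt]
      have hterm : ∀ i : Fin n, HasFDerivAt
          (fun v : EuclideanSpace ℝ (Fin p) =>
            smoothedHinge (μ * ⨆ j, |X i j|) (1 - y i * (inner ℝ (X i) v : ℝ)))
          ((u i w) • (-(y i • (innerSL ℝ (X i))))) w := by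
        intro i
        have h1 : HasFDerivAt (fun v : EuclideanSpace ℝ (Fin p) => (inner ℝ (X i) v : ℝ))
            (innerSL ℝ (X i)) w := (innerSL ℝ (X i)).hasFDerivAt
        have h2 : HasFDerivAt (fun v : EuclideanSpace ℝ (Fin p) =>
            1 - y i * (inner ℝ (X i) v : ℝ)) (-(y i • innerSL ℝ (X i))) w :=
          (h1.const_mul (y i)).const_sub 1
        have h3 : HasDerivAt (smoothedHinge (μ * ⨆ j, |X i j|)) (u i w)
            (1 - y i * (inner ℝ (X i) w : ℝ)) := by
          rw [huc]; exact smoothedHinge_hasDerivAt _ (ha i) _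
        exact h3.comp_hasFDerivAt w h2
      have hnorm : HasFDerivAt (fun v : EuclideanSpace ℝ (Fin p) => (1/2 : ℝ) * ‖v‖^2)
          (innerSL ℝ w) w := by
        have h0 := (hasFDerivAt_id (𝕜 := ℝ) w).inner ℝ (hasFDerivAt_id w)
        have h1 := h0.const_mul (1/2 : ℝ)
        have heq : (fun v : EuclideanSpace ℝ (Fin p) => (1/2 : ℝ) * ‖v‖^2)
            = fun v : EuclideanSpace ℝ (Fin p) => (1/2 : ℝ) * (inner ℝ v v : ℝ) := by
          funext v; rw [real_inner_self_eq_norm_sq]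
        rw [heq]
        refine h1.congr_fderiv ?_
        ext v
        simp [fderivInnerCLM_apply, real_inner_comm]
        have hc : ∑ x : Fin p, v x * w x = ∑ x : Fin p, w x * v x :=
          Finset.sum_congr rfl fun x _ => mul_comm _ _
        ring
      have hfull := hnorm.add ((HasFDerivAt.fun_sum
        (fun i (_ : i ∈ Finset.univ) => hterm i)).const_mul C)
      refine hfull.congr_fderiv ?_
      rw [hgradF]
      ext v
      simp [InnerProductSpace.toDual_apply_apply, inner_sub_left, inner_smul_left, inner_sum,
        real_inner_smul_left, ContinuousLinearMap.sum_apply, Finset.mul_sum]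
      ring_nf
      congr 1
      apply Finset.sum_congr rfl
      intro i _
      ring
    · intro w v
      have key : ∀ i : Fin n, ‖(y i * u i w) • X i - (y i * u i v) • X i‖
          ≤ ‖X i‖^2 / (μ * (⨆ j, |X i j|)) * ‖w - v‖ := by
        intro i
        rw [← sub_smul, norm_smul, Real.norm_eq_abs]
        have e1 : y i * u i w - y i * u i v = y i * (u i w - u i v) := by ring
        rw [e1, abs_mul, habs i, one_mul]
        have e2 : |u i w - u i v|
            ≤ |(1 - y i * (inner ℝ (X i) w : ℝ)) - (1 - y i * (inner ℝ (X i) v : ℝ))|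
              / (μ * (⨆ j, |X i j|)) := by
          rw [huc, huc]; exact clampf_lipschitz _ (ha i) _ _
        have e3 : |(1 - y i * (inner ℝ (X i) w : ℝ)) - (1 - y i * (inner ℝ (X i) v : ℝ))|
            ≤ ‖X i‖ * ‖w - v‖ := by
          have : (1 - y i * (inner ℝ (X i) w : ℝ)) - (1 - y i * (inner ℝ (X i) v : ℝ))
              = -(y i * (inner ℝ (X i) (w - v) : ℝ)) := by
            rw [inner_sub_right]; ring
          rw [this, abs_neg, abs_mul, habs i, one_mul]
          exact abs_real_inner_le_norm _ _
        calc |u i w - u i v| * ‖X i‖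
            ≤ ‖X i‖ * ‖w - v‖ / (μ * (⨆ j, |X i j|)) * ‖X i‖ := by
              apply mul_le_mul_of_nonneg_right _ (norm_nonneg _)
              refine e2.trans ?_
              gcongr
              exact (ha i).le
          _ = ‖X i‖^2 / (μ * (⨆ j, |X i j|)) * ‖w - v‖ := by ring
      rw [hgradF, hgradF]
      have h1 : w - C • ∑ i, (y i * u i w) • X i - (v - C • ∑ i, (y i * u i v) • X i)
          = w - v - C • ∑ i, ((y i * u i w) • X i - (y i * u i v) • X i) := by
        rw [Finset.sum_sub_distrib, smul_sub]; abel
      rw [h1]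
      set M := ⨆ i, ‖X i‖ ^ 2 / (⨆ j, |X i j|) with hM
      have hMb : ∀ i : Fin n, ‖X i‖^2 / (⨆ j, |X i j|) ≤ M :=
        fun i => le_ciSup (f := fun i : Fin n => ‖X i‖ ^ 2 / (⨆ j, |X i j|))
          ((Set.finite_range _).bddAbove) i
      have hterm2 : ∀ i : Fin n, ‖X i‖^2 / (μ * (⨆ j, |X i j|)) ≤ M / μ := by
        intro i
        rw [mul_comm μ, ← div_div]
        gcongr
        exact hMb i
      have hsum : ∑ i : Fin n, ‖X i‖^2 / (μ * (⨆ j, |X i j|)) ≤ n * (M / μ) := by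
        calc ∑ i : Fin n, ‖X i‖^2 / (μ * (⨆ j, |X i j|))
            ≤ ∑ _i : Fin n, M / μ := Finset.sum_le_sum fun i _ => hterm2 i
          _ = n * (M / μ) := by simp [Finset.sum_const, mul_comm]
      have h2 : C * ∑ i : Fin n, ‖X i‖^2 / (μ * (⨆ j, |X i j|)) ≤ C * n / μ * M := by
        calc C * ∑ i : Fin n, ‖X i‖^2 / (μ * (⨆ j, |X i j|))
            ≤ C * (n * (M / μ)) := mul_le_mul_of_nonneg_left hsum hC
          _ = C * n / μ * M := by ring
      calc ‖w - v - C • ∑ i, ((y i * u i w) • X i - (y i * u i v) • X i)‖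
          ≤ ‖w - v‖ + ‖C • ∑ i, ((y i * u i w) • X i - (y i * u i v) • X i)‖ :=
            norm_sub_le _ _
        _ = ‖w - v‖ + C * ‖∑ i, ((y i * u i w) • X i - (y i * u i v) • X i)‖ := by
            rw [norm_smul, Real.norm_eq_abs, abs_of_nonneg hC]
        _ ≤ ‖w - v‖ + C * ∑ i, ‖(y i * u i w) • X i - (y i * u i v) • X i‖ := by
            gcongr
            exact norm_sum_le _ _
        _ ≤ ‖w - v‖ + C * ∑ i : Fin n, ‖X i‖^2 / (μ * (⨆ j, |X i j|)) * ‖w - v‖ := by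
            gcongr with i hi
            exact key i
        _ = (1 + C * ∑ i : Fin n, ‖X i‖^2 / (μ * (⨆ j, |X i j|))) * ‖w - v‖ := by
            rw [← Finset.sum_mul]; ring
        _ ≤ (1 + C * n / μ * M) * ‖w - v‖ := by
            apply mul_le_mul_of_nonneg_right _ (norm_nonneg _)
            linarith [h2]
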